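/- Assume I = [a,b] ⊆ ℝ. For a function f : Iⁿ → ℝ the following are equivalent: (i) f is comonotonic maxitive; (ii) there are nondecreasing unary functions φ_S : I → ℝ (S ⊆ X) such that f(x) = ⋁_{S⊆X} φ_S(⋀_{i∈S} x_i) for all x ∈ Iⁿ (with ⋀_{i∈∅} x_i = b), and one may take φ_S(x) = f(e_S ∧ x); (iii) for every permutation σ of X there are nondecreasing functions f^σ_i : I → ℝ (i = 1,…,n) such that f(x) = ⋁_{i=1}^n f^σ_i(x_{σ(i)}) for every x ∈ Iⁿ_σ, and one may take f^σ_i(x) = f(e_{S↑_σ(i)} ∧ x). -/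

import Mathlib

/-- `S↑_σ(i)` (0-indexed): the set `{σ(i), σ(i+1), …, σ(n-1)}`.  For `i = n` it is empty. -/
def SUp {n : ℕ} (σ : Equiv.Perm (Fin n)) (i : ℕ) : Finset (Fin n) :=
  (Finset.univ.filter (fun j : Fin n => i ≤ (j : ℕ))).image σ

/-- `S↓_σ(i)`: the set `{σ(0), …, σ(i-1)}`.  For `i = 0` it is empty. -/
def SDown {n : ℕ} (σ : Equiv.Perm (Fin n)) (i : ℕ) : Finset (Fin n) :=
  (Finset.univ.filter (fun j : Fin n => (j : ℕ) < i)).image σ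

/-- Two tuples are comonotonic if some permutation sorts both nondecreasingly. -/
def Comonotone {n : ℕ} (x y : Fin n → ℝ) : Prop :=
  ∃ σ : Equiv.Perm (Fin n), Monotone (x ∘ σ) ∧ Monotone (y ∘ σ)

/-- The tuple `r·1_S`. -/
def indTuple {n : ℕ} (S : Finset (Fin n)) (r : ℝ) : Fin n → ℝ :=
  fun j => if j ∈ S then r else 0

/-- The signed Choquet integral of `x` w.r.t. `v`, computed via a sorting permutation. -/
noncomputable def Cv {n : ℕ} (v : Finset (Fin n) → ℝ) (x : Fin n → ℝ) : ℝ :=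
  ∑ i : Fin n,
    x (Tuple.sort x i) *
      (v (SUp (Tuple.sort x) (i : ℕ)) - v (SUp (Tuple.sort x) ((i : ℕ) + 1)))

/-- `f` is the restriction to `Iⁿ` of a signed Choquet integral. -/
def IsSignedChoquetOn {n : ℕ} (I : Set ℝ) (f : (Fin n → ℝ) → ℝ) : Prop :=
  ∃ v : Finset (Fin n) → ℝ, v ∅ = 0 ∧
    ∀ σ : Equiv.Perm (Fin n), ∀ x : Fin n → ℝ, (∀ i, x i ∈ I) → Monotone (x ∘ σ) →
      f x = ∑ i : Fin n, x (σ i) * (v (SUp σ (i : ℕ)) - v (SUp σ ((i : ℕ) + 1)))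

/-- `f` is the restriction to `Iⁿ` of a symmetric signed Choquet integral
`Č_v(x) = C_v(x⁺) - C_v(x⁻)`. -/
def IsSymSignedChoquetOn {n : ℕ} (I : Set ℝ) (f : (Fin n → ℝ) → ℝ) : Prop :=
  ∃ v : Finset (Fin n) → ℝ, v ∅ = 0 ∧
    ∀ x : Fin n → ℝ, (∀ i, x i ∈ I) →
      f x = Cv v (fun i => max (x i) 0) - Cv v (fun i => max (-x i) 0)

/-- Comonotonic modularity (on tuples with entries in `D`). -/
def ComonModularOn {n : ℕ} (D : Set ℝ) (f : (Fin n → ℝ) → ℝ) : Prop :=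
  ∀ x y : Fin n → ℝ, (∀ i, x i ∈ D) → (∀ i, y i ∈ D) → Comonotone x y →
    f x + f y = f (fun i => min (x i) (y i)) + f (fun i => max (x i) (y i))

/-- Comonotonic additivity (on tuples with entries in `D`). -/
def ComonAdditiveOn {n : ℕ} (D : Set ℝ) (f : (Fin n → ℝ) → ℝ) : Prop :=
  ∀ x y : Fin n → ℝ, (∀ i, x i ∈ D) → (∀ i, y i ∈ D) → Comonotone x y →
    (∀ i, x i + y i ∈ D) → f (fun i => x i + y i) = f x + f y

/-- Comonotonic maxitivity. -/
def ComonMaxitiveOn {n : ℕ} (D : Set ℝ) (f : (Fin n → ℝ) → ℝ) : Prop :=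
  ∀ x y : Fin n → ℝ, (∀ i, x i ∈ D) → (∀ i, y i ∈ D) → Comonotone x y →
    f (fun i => max (x i) (y i)) = max (f x) (f y)

/-- Comonotonic minitivity. -/
def ComonMinitiveOn {n : ℕ} (D : Set ℝ) (f : (Fin n → ℝ) → ℝ) : Prop :=
  ∀ x y : Fin n → ℝ, (∀ i, x i ∈ D) → (∀ i, y i ∈ D) → Comonotone x y →
    f (fun i => min (x i) (y i)) = min (f x) (f y)

/-- Horizontal min-additivity. -/
def HorizMinAdditiveOn {n : ℕ} (D : Set ℝ) (f : (Fin n → ℝ) → ℝ) : Prop :=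
  ∀ x : Fin n → ℝ, (∀ i, x i ∈ D) → ∀ c ∈ D, (∀ i, x i - min (x i) c ∈ D) →
    f x = f (fun i => min (x i) c) + f (fun i => x i - min (x i) c)

/-- Horizontal max-additivity. -/
def HorizMaxAdditiveOn {n : ℕ} (D : Set ℝ) (f : (Fin n → ℝ) → ℝ) : Prop :=
  ∀ x : Fin n → ℝ, (∀ i, x i ∈ D) → ∀ c ∈ D, (∀ i, x i - max (x i) c ∈ D) →
    f x = f (fun i => max (x i) c) + f (fun i => x i - max (x i) c)

/-- Horizontal median-additivity (for `I` centered at `0`). -/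
def HorizMedAdditiveOn {n : ℕ} (I : Set ℝ) (f : (Fin n → ℝ) → ℝ) : Prop :=
  ∀ x : Fin n → ℝ, (∀ i, x i ∈ I) → ∀ c ∈ I, 0 ≤ c →
    f x = f (fun i => max (-c) (min (x i) c)) + f (fun i => x i - min (x i) c)
        + f (fun i => x i - max (x i) (-c))

/-- Invariance under horizontal min-differences (for domains of nonnegative tuples). -/
def InvHMinDiffOn {n : ℕ} (D : Set ℝ) (f : (Fin n → ℝ) → ℝ) : Prop :=
  ∀ x : Fin n → ℝ, (∀ i, x i ∈ D) → ∀ c ∈ D,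
    f x - f (fun i => min (x i) c) =
      f (fun i => if x i ≤ c then 0 else x i) -
        f (fun i => min (if x i ≤ c then 0 else x i) c)

/-- Invariance under horizontal max-differences (for domains of nonpositive tuples). -/
def InvHMaxDiffOn {n : ℕ} (D : Set ℝ) (f : (Fin n → ℝ) → ℝ) : Prop :=
  ∀ x : Fin n → ℝ, (∀ i, x i ∈ D) → ∀ c ∈ D,
    f x - f (fun i => max (x i) c) =
      f (fun i => if c ≤ x i then 0 else x i) -
        f (fun i => max (if c ≤ x i then 0 else x i) c)

/-- `⋀_{i ∈ S} x i`, with the convention that the empty infimum is `b`. -/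
noncomputable def infWith {n : ℕ} (b : ℝ) (S : Finset (Fin n)) (x : Fin n → ℝ) : ℝ :=
  if h : S.Nonempty then S.inf' h x else b

/-- An `[a,b]`-valued capacity. -/
def IsCapacityOn {n : ℕ} (a b : ℝ) (μ : Finset (Fin n) → ℝ) : Prop :=
  μ ∅ = a ∧ μ Finset.univ = b ∧ ∀ S T : Finset (Fin n), S ⊆ T → μ S ≤ μ T

/-- `f` is nondecreasing (in each argument) on tuples with entries in `D`. -/
def NondecreasingOn {n : ℕ} (D : Set ℝ) (f : (Fin n → ℝ) → ℝ) : Prop :=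
  ∀ x y : Fin n → ℝ, (∀ i, x i ∈ D) → (∀ i, y i ∈ D) → (∀ i, x i ≤ y i) → f x ≤ f y

/-- The cut tuple `e_S ∧ r`. -/
def cutT {n : ℕ} (a b : ℝ) (S : Finset (Fin n)) (r : ℝ) : Fin n → ℝ :=
  fun j => min (if j ∈ S then b else a) r

lemma mem_SUp {n : ℕ} (σ : Equiv.Perm (Fin n)) (i : ℕ) (j : Fin n) :
    j ∈ SUp σ i ↔ i ≤ ((σ.symm j : Fin n) : ℕ) := by
  simp only [SUp, Finset.mem_image, Finset.mem_filter, Finset.mem_univ, true_and]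
  constructor
  · rintro ⟨k, hk, rfl⟩; simpa using hk
  · intro h; exact ⟨σ.symm j, h, σ.apply_symm_apply j⟩

lemma sigma_mem_SUp {n : ℕ} (σ : Equiv.Perm (Fin n)) (i : ℕ) (k : Fin n) :
    σ k ∈ SUp σ i ↔ i ≤ (k : ℕ) := by
  rw [mem_SUp]; simp

lemma cutT_mem {n : ℕ} {a b r : ℝ} (S : Finset (Fin n)) (hr : r ∈ Set.Icc a b) (j : Fin n) :
    cutT a b S r j ∈ Set.Icc a b := by
  unfold cutT
  constructor
  · refine le_min ?_ hr.1
    split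
    exacts [hr.1.trans hr.2, le_rfl]
  · exact (min_le_right _ _).trans hr.2

lemma cutT_eval {n : ℕ} {a b r : ℝ} (S : Finset (Fin n)) (hr : r ∈ Set.Icc a b) (j : Fin n) :
    cutT a b S r j = if j ∈ S then r else a := by
  unfold cutT
  by_cases h : j ∈ S <;> simp [h, min_eq_right hr.2, min_eq_left hr.1]

/-- Two cut tuples with nested supports are comonotone, and the inequality transfers. -/
lemma cutT_comon {n : ℕ} {a b r r' : ℝ} {S T : Finset (Fin n)} (hST : S ⊆ T)
    (hr : r ∈ Set.Icc a b) (hr' : r' ∈ Set.Icc a b) :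
    Comonotone (cutT a b S r) (cutT a b T r') := by
  classical
  set w : Fin n → ℝ := fun j => (if j ∈ S then (1:ℝ) else 0) + (if j ∈ T then 1 else 0) with hw
  refine ⟨Tuple.sort w, ?_, ?_⟩
  · intro k l hkl
    have hmw := Tuple.monotone_sort w hkl
    simp only [Function.comp_apply] at hmw ⊢
    rw [cutT_eval S hr, cutT_eval S hr]
    by_cases hk : Tuple.sort w k ∈ S
    · have hkT : Tuple.sort w k ∈ T := hST hk
      have h2 : w (Tuple.sort w k) = 2 := by
        show (if Tuple.sort w k ∈ S then (1:ℝ) else 0) + (if Tuple.sort w k ∈ T then 1 else 0) = 2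
        rw [if_pos hk, if_pos hkT]; norm_num
      have hl2 : (2:ℝ) ≤ w (Tuple.sort w l) := h2 ▸ hmw
      have hlS : Tuple.sort w l ∈ S := by
        by_contra hlS
        have : w (Tuple.sort w l) ≤ 1 := by
          show (if Tuple.sort w l ∈ S then (1:ℝ) else 0) + (if Tuple.sort w l ∈ T then 1 else 0) ≤ 1
          rw [if_neg hlS, zero_add]
          split <;> norm_num
        linarith
      simp [hk, hlS]
    · simp only [hk, if_false]
      split <;> [exact hr.1; exact le_rfl]
  · intro k l hkl
    have hmw := Tuple.monotone_sort w hkl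
    simp only [Function.comp_apply] at hmw ⊢
    rw [cutT_eval T hr', cutT_eval T hr']
    by_cases hk : Tuple.sort w k ∈ T
    · have h1 : (1:ℝ) ≤ w (Tuple.sort w k) := by
        simp only [hw, hk, if_true]
        split <;> norm_num
      have hlT : Tuple.sort w l ∈ T := by
        by_contra hlT
        have hlS : Tuple.sort w l ∉ S := fun h => hlT (hST h)
        have : w (Tuple.sort w l) = 0 := by
          show (if Tuple.sort w l ∈ S then (1:ℝ) else 0) + (if Tuple.sort w l ∈ T then 1 else 0) = 0
          rw [if_neg hlS, if_neg hlT]; norm_num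
        linarith [hmw]
      simp [hk, hlT]
    · simp only [hk, if_false]
      split <;> [exact hr'.1; exact le_rfl]

/-- Comparison: `f(e_S ∧ r) ≤ f(e_T ∧ r')` for `S ⊆ T`, `r ≤ r'`. -/
lemma cutT_le {n : ℕ} {a b r r' : ℝ} {f : (Fin n → ℝ) → ℝ}
    (hf : ComonMaxitiveOn (Set.Icc a b) f) {S T : Finset (Fin n)} (hST : S ⊆ T)
    (hr : r ∈ Set.Icc a b) (hr' : r' ∈ Set.Icc a b) (hrr' : r ≤ r') :
    f (cutT a b S r) ≤ f (cutT a b T r') := by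
  have hmax : (fun i => max (cutT a b S r i) (cutT a b T r' i)) = cutT a b T r' := by
    funext j
    rw [cutT_eval S hr, cutT_eval T hr']
    by_cases hj : j ∈ S
    · simp [hj, hST hj, max_eq_right hrr']
    · by_cases hj' : j ∈ T <;> simp [hj, hj', max_eq_right, hr'.1]
  have := hf (cutT a b S r) (cutT a b T r') (cutT_mem S hr) (cutT_mem T hr')
    (cutT_comon hST hr hr')
  rw [hmax] at this
  rw [this]
  exact le_max_left _ _

/-- Maxitivity over a finite sup of commonly-sorted tuples. -/
lemma maxitive_sup' {n : ℕ} {a b : ℝ} {f : (Fin n → ℝ) → ℝ}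
    (hf : ComonMaxitiveOn (Set.Icc a b) f) (σ : Equiv.Perm (Fin n))
    {ι : Type*} (s : Finset ι) (hs : s.Nonempty) (y : ι → Fin n → ℝ)
    (h1 : ∀ k ∈ s, ∀ j, y k j ∈ Set.Icc a b) (h2 : ∀ k ∈ s, Monotone (y k ∘ σ)) :
    f (fun j => s.sup' hs (fun k => y k j)) = s.sup' hs (fun k => f (y k)) := by
  classical
  induction hs using Finset.Nonempty.cons_induction with
  | singleton k => simp
  | cons k s hk hs ih =>
    have h1' : ∀ m ∈ s, ∀ j, y m j ∈ Set.Icc a b :=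
      fun m hm => h1 m (Finset.mem_cons_of_mem hm)
    have h2' : ∀ m ∈ s, Monotone (y m ∘ σ) := fun m hm => h2 m (Finset.mem_cons_of_mem hm)
    have hsupmem : ∀ j, s.sup' hs (fun m => y m j) ∈ Set.Icc a b := by
      intro j
      obtain ⟨m, hm⟩ := hs
      constructor
      · exact le_trans (h1' m hm j).1 (Finset.le_sup' (fun m => y m j) hm)
      · exact Finset.sup'_le _ _ fun m hm => (h1' m hm j).2
    have hsupmono : Monotone ((fun j => s.sup' hs (fun m => y m j)) ∘ σ) := by
      intro k' l' hkl
      simp only [Function.comp_apply]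
      exact Finset.sup'_le _ _ fun m hm =>
        le_trans (h2' m hm hkl) (Finset.le_sup' (fun m => y m (σ l')) hm)
    have key := hf (y k) (fun j => s.sup' hs (fun m => y m j))
      (h1 k (Finset.mem_cons_self k s)) hsupmem ⟨σ, h2 k (Finset.mem_cons_self k s), hsupmono⟩
    simp only [Finset.sup'_cons hs]
    rw [← ih h1' h2']
    exact key

/-- For `σ`-sorted `x`, `x` is the pointwise sup of the cut tuples. -/
lemma key_rep {n : ℕ} (hn : 0 < n) {a b : ℝ} {f : (Fin n → ℝ) → ℝ}
    (hf : ComonMaxitiveOn (Set.Icc a b) f) (σ : Equiv.Perm (Fin n)) (x : Fin n → ℝ)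
    (hx : ∀ i, x i ∈ Set.Icc a b) (hmono : Monotone (x ∘ σ)) :
    f x = Finset.sup' Finset.univ ⟨⟨0, hn⟩, Finset.mem_univ _⟩
      (fun i : Fin n => f (cutT a b (SUp σ (i : ℕ)) (x (σ i)))) := by
  classical
  set y : Fin n → Fin n → ℝ := fun i => cutT a b (SUp σ (i : ℕ)) (x (σ i)) with hy
  have hxσ : ∀ i : Fin n, x (σ i) ∈ Set.Icc a b := fun i => hx (σ i)
  have hyval : ∀ i j : Fin n, y i j = if (i : ℕ) ≤ ((σ.symm j : Fin n) : ℕ) then x (σ i) else a := by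
    intro i j
    show cutT a b (SUp σ (i : ℕ)) (x (σ i)) j = _
    simp only [cutT_eval _ (hxσ i), mem_SUp]
  have h1 : ∀ i ∈ (Finset.univ : Finset (Fin n)), ∀ j, y i j ∈ Set.Icc a b :=
    fun i _ j => cutT_mem _ (hxσ i) j
  have h2 : ∀ i ∈ (Finset.univ : Finset (Fin n)), Monotone (y i ∘ σ) := by
    intro i _ k l hkl
    simp only [Function.comp_apply, hyval]
    simp only [Equiv.symm_apply_apply]
    by_cases hik : (i : ℕ) ≤ (k : ℕ)
    · rw [if_pos hik, if_pos (hik.trans hkl)]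
    · rw [if_neg hik]
      split
      · exact (hxσ i).1
      · exact le_rfl
  have hpoint : x = fun j => Finset.univ.sup' ⟨⟨0, hn⟩, Finset.mem_univ _⟩ (fun i => y i j) := by
    funext j
    apply le_antisymm
    · have : y (σ.symm j) j = x j := by
        rw [hyval, if_pos le_rfl, Equiv.apply_symm_apply]
      rw [← this]
      exact Finset.le_sup' (fun i => y i j) (Finset.mem_univ _)
    · apply Finset.sup'_le
      intro i _
      rw [hyval]
      split
      · rename_i h
        have : x (σ i) ≤ x (σ (σ.symm j)) := hmono (show i ≤ σ.symm j from Fin.le_def.mpr h)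
        rwa [Equiv.apply_symm_apply] at this
      · exact (hx j).1
  conv_lhs => rw [hpoint]
  exact maxitive_sup' hf σ _ _ y h1 h2

/-- The σ-earliest element of a nonempty set. -/
lemma exists_minpos {n : ℕ} (σ : Equiv.Perm (Fin n)) {S : Finset (Fin n)} (hS : S.Nonempty) :
    ∃ k : Fin n, σ k ∈ S ∧ S ⊆ SUp σ (k : ℕ) ∧ ∀ j ∈ S, k ≤ σ.symm j := by
  classical
  have him : (S.image σ.symm).Nonempty := hS.image _
  refine ⟨(S.image σ.symm).min' him, ?_, ?_, ?_⟩
  · have := Finset.min'_mem (S.image σ.symm) him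
    obtain ⟨j, hj, hj'⟩ := Finset.mem_image.mp this
    rw [← hj', Equiv.apply_symm_apply]
    exact hj
  · intro j hj
    rw [mem_SUp]
    exact_mod_cast Finset.min'_le _ _ (Finset.mem_image_of_mem _ hj)
  · intro j hj
    exact Finset.min'_le _ _ (Finset.mem_image_of_mem _ hj)

lemma infWith_eq {n : ℕ} {b : ℝ} (σ : Equiv.Perm (Fin n)) {S : Finset (Fin n)} (hS : S.Nonempty)
    {x : Fin n → ℝ} (hmono : Monotone (x ∘ σ)) {k : Fin n}
    (hk : σ k ∈ S) (hk2 : ∀ j ∈ S, k ≤ σ.symm j) :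
    infWith b S x = x (σ k) := by
  rw [infWith, dif_pos hS]
  apply le_antisymm (Finset.inf'_le _ hk)
  apply Finset.le_inf'
  intro j hj
  have := hmono (hk2 j hj)
  simpa using this

lemma infWith_mem {n : ℕ} {a b : ℝ} (hab : a ≤ b) (S : Finset (Fin n)) {x : Fin n → ℝ}
    (hx : ∀ i, x i ∈ Set.Icc a b) : infWith b S x ∈ Set.Icc a b := by
  rw [infWith]
  split
  · rename_i h
    obtain ⟨j, hj⟩ := h
    exact ⟨Finset.le_inf' _ _ fun m hm => (hx m).1, (Finset.inf'_le _ hj).trans (hx j).2⟩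
  · exact ⟨hab, le_rfl⟩

/-- Part 3: sup over all subsets. -/
lemma part3 {n : ℕ} (hn : 0 < n) {a b : ℝ} (hab : a ≤ b) {f : (Fin n → ℝ) → ℝ}
    (hf : ComonMaxitiveOn (Set.Icc a b) f) (x : Fin n → ℝ) (hx : ∀ i, x i ∈ Set.Icc a b) :
    f x = Finset.sup' Finset.univ ⟨∅, Finset.mem_univ ∅⟩
      (fun S : Finset (Fin n) => f (cutT a b S (infWith b S x))) := by
  classical
  set σ := Tuple.sort x with hσ
  have hmono : Monotone (x ∘ σ) := Tuple.monotone_sort x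
  have hxσ : ∀ i : Fin n, x (σ i) ∈ Set.Icc a b := fun i => hx (σ i)
  have hkey := key_rep hn hf σ x hx hmono
  -- each term f (cutT a b (SUp σ i) (x (σ i))) is ≤ f x, and their sup is f x
  have hterm_le : ∀ i : Fin n, f (cutT a b (SUp σ (i : ℕ)) (x (σ i))) ≤ f x := by
    intro i
    rw [hkey]
    exact Finset.le_sup' (fun i : Fin n => f (cutT a b (SUp σ (i : ℕ)) (x (σ i))))
      (Finset.mem_univ i)
  apply le_antisymm
  · rw [hkey]
    apply Finset.sup'_le
    intro i _
    have hinf : infWith b (SUp σ (i : ℕ)) x = x (σ i) := by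
      apply infWith_eq σ ⟨σ i, (sigma_mem_SUp σ _ i).mpr le_rfl⟩ hmono
        ((sigma_mem_SUp σ _ i).mpr le_rfl)
      intro j hj
      rw [mem_SUp] at hj
      exact Fin.le_def.mpr (by simpa using hj)
    have := Finset.le_sup' (f := fun S : Finset (Fin n) => f (cutT a b S (infWith b S x)))
      (Finset.mem_univ (SUp σ (i : ℕ)))
    rw [hinf] at this
    exact this
  · apply Finset.sup'_le
    intro S _
    by_cases hS : S.Nonempty
    · obtain ⟨k, hk1, hk2, hk3⟩ := exists_minpos σ hS
      rw [infWith_eq σ hS hmono hk1 hk3]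
      exact (cutT_le hf hk2 (hxσ k) (hxσ k) le_rfl).trans (hterm_le k)
    · rw [Finset.not_nonempty_iff_eq_empty] at hS
      subst hS
      have h0 : infWith b (∅ : Finset (Fin n)) x = b := by
        rw [infWith, dif_neg (by simp)]
      rw [h0]
      have heq : cutT a b (∅ : Finset (Fin n)) b = cutT a b ∅ (x (σ ⟨0, hn⟩)) := by
        funext j
        rw [cutT_eval _ ⟨hab, le_rfl⟩, cutT_eval _ (hxσ _)]
        simp
      rw [heq]
      exact (cutT_le hf (Finset.empty_subset _) (hxσ _) (hxσ _) le_rfl).trans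
        (hterm_le ⟨0, hn⟩)

lemma infWith_max {n : ℕ} {b : ℝ} (σ : Equiv.Perm (Fin n)) {x y : Fin n → ℝ}
    (hmx : Monotone (x ∘ σ)) (hmy : Monotone (y ∘ σ)) (S : Finset (Fin n)) :
    infWith b S (fun i => max (x i) (y i)) = max (infWith b S x) (infWith b S y) := by
  by_cases hS : S.Nonempty
  · obtain ⟨k, hk1, _, hk3⟩ := exists_minpos σ hS
    have hmz : Monotone ((fun i => max (x i) (y i)) ∘ σ) := fun p q h =>
      max_le_max (hmx h) (hmy h)
    rw [infWith_eq σ hS hmx hk1 hk3, infWith_eq σ hS hmy hk1 hk3,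
      infWith_eq σ hS hmz hk1 hk3]
  · rw [Finset.not_nonempty_iff_eq_empty] at hS
    subst hS
    simp [infWith]

lemma sup'_max {ι : Type*} (s : Finset ι) (hs : s.Nonempty) (p q : ι → ℝ) :
    s.sup' hs (fun i => max (p i) (q i)) = max (s.sup' hs p) (s.sup' hs q) := by
  apply le_antisymm
  · exact Finset.sup'_le _ _ fun i hi => max_le_max (Finset.le_sup' p hi) (Finset.le_sup' q hi)
  · exact max_le
      (Finset.sup'_le _ _ fun i hi =>
        (le_max_left (p i) (q i)).trans (Finset.le_sup' (fun i => max (p i) (q i)) hi))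
      (Finset.sup'_le _ _ fun i hi =>
        (le_max_right (p i) (q i)).trans (Finset.le_sup' (fun i => max (p i) (q i)) hi))

lemma maxmem {n : ℕ} {a b : ℝ} {x y : Fin n → ℝ} (hx : ∀ i, x i ∈ Set.Icc a b)
    (hy : ∀ i, y i ∈ Set.Icc a b) : ∀ i, max (x i) (y i) ∈ Set.Icc a b := fun i =>
  ⟨le_trans (hx i).1 (le_max_left _ _), max_le (hx i).2 (hy i).2⟩

/-- Backward direction, subset form. -/
lemma backward1 {n : ℕ} {a b : ℝ} (hab : a ≤ b) {f : (Fin n → ℝ) → ℝ}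
    {φ : Finset (Fin n) → ℝ → ℝ}
    (hφ : ∀ S : Finset (Fin n), ∀ y ∈ Set.Icc a b, ∀ z ∈ Set.Icc a b, y ≤ z → φ S y ≤ φ S z)
    (hrep : ∀ x : Fin n → ℝ, (∀ i, x i ∈ Set.Icc a b) →
      f x = Finset.sup' Finset.univ ⟨∅, Finset.mem_univ ∅⟩
        (fun S : Finset (Fin n) => φ S (infWith b S x))) :
    ComonMaxitiveOn (Set.Icc a b) f := by
  intro x y hx hy ⟨σ, hmx, hmy⟩
  rw [hrep _ (maxmem hx hy), hrep x hx, hrep y hy]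
  refine Eq.trans ?_ (sup'_max _ _ _ _)
  apply Finset.sup'_congr _ rfl
  intro S _
  rw [infWith_max σ hmx hmy S]
  rcases le_total (infWith b S x) (infWith b S y) with h | h
  · rw [max_eq_right h, max_eq_right (hφ S _ (infWith_mem hab S hx) _ (infWith_mem hab S hy) h)]
  · rw [max_eq_left h, max_eq_left (hφ S _ (infWith_mem hab S hy) _ (infWith_mem hab S hx) h)]

/-- Backward direction, permutation form. -/
lemma backward2 {n : ℕ} (hn : 0 < n) {a b : ℝ} {f : (Fin n → ℝ) → ℝ}
    (hrep : ∀ σ : Equiv.Perm (Fin n), ∃ g : Fin n → ℝ → ℝ,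
      (∀ i : Fin n, ∀ y ∈ Set.Icc a b, ∀ z ∈ Set.Icc a b, y ≤ z → g i y ≤ g i z) ∧
      ∀ x : Fin n → ℝ, (∀ i, x i ∈ Set.Icc a b) → Monotone (x ∘ σ) →
        f x = Finset.sup' Finset.univ ⟨⟨0, hn⟩, Finset.mem_univ _⟩
          (fun i : Fin n => g i (x (σ i)))) :
    ComonMaxitiveOn (Set.Icc a b) f := by
  intro x y hx hy ⟨σ, hmx, hmy⟩
  obtain ⟨g, hg, hrep⟩ := hrep σ
  have hmz : Monotone ((fun i => max (x i) (y i)) ∘ σ) := fun p q h =>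
    max_le_max (hmx h) (hmy h)
  rw [hrep _ (maxmem hx hy) hmz, hrep x hx hmx, hrep y hy hmy]
  refine Eq.trans ?_ (sup'_max _ _ _ _)
  apply Finset.sup'_congr _ rfl
  intro i _
  rcases le_total (x (σ i)) (y (σ i)) with h | h
  · rw [max_eq_right h, max_eq_right (hg i _ (hx (σ i)) _ (hy (σ i)) h)]
  · rw [max_eq_left h, max_eq_left (hg i _ (hy (σ i)) _ (hx (σ i)) h)]

theorem statement12 (n : ℕ) (hn : 0 < n) (a b : ℝ) (hab : a < b)
    (f : (Fin n → ℝ) → ℝ) :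
    (ComonMaxitiveOn (Set.Icc a b) f ↔
      ∃ φ : Finset (Fin n) → ℝ → ℝ,
        (∀ S : Finset (Fin n), ∀ y ∈ Set.Icc a b, ∀ z ∈ Set.Icc a b, y ≤ z → φ S y ≤ φ S z) ∧
        ∀ x : Fin n → ℝ, (∀ i, x i ∈ Set.Icc a b) →
          f x = Finset.sup' Finset.univ ⟨∅, Finset.mem_univ ∅⟩
            (fun S : Finset (Fin n) => φ S (infWith b S x)))
    ∧
    (ComonMaxitiveOn (Set.Icc a b) f ↔
      ∀ σ : Equiv.Perm (Fin n), ∃ g : Fin n → ℝ → ℝ,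
        (∀ i : Fin n, ∀ y ∈ Set.Icc a b, ∀ z ∈ Set.Icc a b, y ≤ z → g i y ≤ g i z) ∧
        ∀ x : Fin n → ℝ, (∀ i, x i ∈ Set.Icc a b) → Monotone (x ∘ σ) →
          f x = Finset.sup' Finset.univ ⟨⟨0, hn⟩, Finset.mem_univ _⟩
            (fun i : Fin n => g i (x (σ i))))
    ∧
    (ComonMaxitiveOn (Set.Icc a b) f →
      ∀ x : Fin n → ℝ, (∀ i, x i ∈ Set.Icc a b) →
        f x = Finset.sup' Finset.univ ⟨∅, Finset.mem_univ ∅⟩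
          (fun S : Finset (Fin n) =>
            f (fun i => min (if i ∈ S then b else a) (infWith b S x))))
    ∧
    (ComonMaxitiveOn (Set.Icc a b) f →
      ∀ σ : Equiv.Perm (Fin n), ∀ x : Fin n → ℝ,
        (∀ i, x i ∈ Set.Icc a b) → Monotone (x ∘ σ) →
        f x = Finset.sup' Finset.univ ⟨⟨0, hn⟩, Finset.mem_univ _⟩
          (fun i : Fin n =>
            f (fun j => min (if j ∈ SUp σ (i : ℕ) then b else a) (x (σ i))))) := by
    refine ⟨?_, ?_, ?_, ?_⟩
    · constructor
      · intro hf
        refine ⟨fun S r => f (cutT a b S r), ?_, ?_⟩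
        · intro S y hy z hz hyz
          exact cutT_le hf subset_rfl hy hz hyz
        · intro x hx
          exact part3 hn hab.le hf x hx
      · rintro ⟨φ, hφ, hrep⟩
        exact backward1 hab.le hφ hrep
    · constructor
      · intro hf σ
        refine ⟨fun i r => f (cutT a b (SUp σ (i : ℕ)) r), ?_, ?_⟩
        · intro i y hy z hz hyz
          exact cutT_le hf subset_rfl hy hz hyz
        · intro x hx hmono
          exact key_rep hn hf σ x hx hmono
      · intro hrep
        exact backward2 hn hrep
    · intro hf x hx
      exact part3 hn hab.le hf x hx
    · intro hf σ x hx hmono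
      exact key_rep hn hf σ x hx hmono
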